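/- Let u be positively homogeneous of degree α ∈ (0,1), C², and positive on an open cone Ω ⊂ ℝⁿ \ {0}, with det D²u nowhere zero on Ω. Then v := u^{1/α} (a 1-homogeneous function) satisfies σ_{n-1}(D²v) ≠ 0 everywhere on Ω, and σ_{n-1}(D²v) has the sign of det D²u divided by (α−1), i.e. opposite sign to det D²u. -/

import Mathlib

/-- The Hessian matrix of `v` at `x`. -/
noncomputable def hessianMatrix (n : ℕ) (v : EuclideanSpace ℝ (Fin n) → ℝ)
    (x : EuclideanSpace ℝ (Fin n)) : Matrix (Fin n) (Fin n) ℝ :=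
  Matrix.of fun i j =>
    iteratedFDeriv ℝ 2 v x ![EuclideanSpace.single i 1, EuclideanSpace.single j 1]

open Matrix

lemma det_add_outer_aux {n : ℕ} (u w : Fin n → ℝ) (s : Finset (Fin n)) :
    ∀ A : Matrix (Fin n) (Fin n) ℝ,
    (Matrix.of fun i j => A i j + if i ∈ s then u i * w j else 0).det
      = A.det + ∑ i ∈ s, u i * (A.updateRow i w).det := by
  induction s using Finset.induction_on with
  | empty => intro A; simp; rfl
  | @insert a s ha ih =>
    intro A
    have hB : (Matrix.of fun i j => A i j + if i ∈ insert a s then u i * w j else 0)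
        = Matrix.updateRow (Matrix.of fun i j => A i j + if i ∈ s then u i * w j else 0) a
            ((Matrix.of fun i j => A i j + if i ∈ s then u i * w j else 0) a + u a • w) := by
      ext i j
      rcases eq_or_ne i a with rfl | hia
      · simp [ha]
      · simp [Matrix.updateRow_ne hia, Finset.mem_insert, hia]
    have hB2 : Matrix.updateRow
          (Matrix.of fun i j => A i j + if i ∈ s then u i * w j else 0) a w
        = (Matrix.of fun i j => (A.updateRow a w) i j + if i ∈ s then u i * w j else 0) := by
      ext i j
      rcases eq_or_ne i a with rfl | hia
      · simp [ha]
      · simp [Matrix.updateRow_ne hia, hia]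
    rw [hB, Matrix.det_updateRow_add, Matrix.det_updateRow_smul, Matrix.updateRow_eq_self, ih,
      hB2, ih]
    have hzero : ∀ i ∈ s, u i * ((A.updateRow a w).updateRow i w).det = 0 := by
      intro i hi
      have hia : i ≠ a := fun h => ha (h ▸ hi)
      have : ((A.updateRow a w).updateRow i w) i = ((A.updateRow a w).updateRow i w) a := by
        rw [Matrix.updateRow_self, Matrix.updateRow_ne hia.symm, Matrix.updateRow_self]
      rw [Matrix.det_zero_of_row_eq hia this, mul_zero]
    rw [Finset.sum_eq_zero hzero, Finset.sum_insert ha]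
    ring

lemma det_add_outer {n : ℕ} (u w : Fin n → ℝ) (A : Matrix (Fin n) (Fin n) ℝ) :
    (Matrix.of fun i j => A i j + u i * w j).det
      = A.det + ∑ i, u i * (A.updateRow i w).det := by
  have := det_add_outer_aux u w Finset.univ A
  simpa using this

lemma adjugate_eq_smul_outer {n : ℕ} (M : Matrix (Fin n) (Fin n) ℝ)
    (hsym : Mᵀ = M) (x : Fin n → ℝ) (hx : x ≠ 0) (hMx : M *ᵥ x = 0) :
    ∃ c : ℝ, ∀ k j, M.adjugate k j = c * x k * x j := by
  by_cases hadj : M.adjugate = 0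
  · exact ⟨0, fun k j => by simp [hadj]⟩
  have hdetM : M.det = 0 := Matrix.exists_mulVec_eq_zero_iff.1 ⟨x, hx, hMx⟩
  obtain ⟨i, j₀, hij⟩ : ∃ i j, M.adjugate i j ≠ 0 := by
    by_contra h
    push_neg at h
    exact hadj (by ext k l; simpa using h k l)
  set B := M.updateRow j₀ (Pi.single i 1) with hBdef
  have hBdet : B.det ≠ 0 := by rwa [← Matrix.adjugate_apply]
  have key : ∀ y : Fin n → ℝ, M *ᵥ y = 0 → B *ᵥ y = y i • (Pi.single j₀ 1 : Fin n → ℝ) := by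
    intro y hy
    funext k
    rcases eq_or_ne k j₀ with rfl | hk
    · simp [hBdef, Matrix.mulVec, dotProduct, Pi.single_apply]
    · have : B k = M k := Matrix.updateRow_ne hk
      have h1 : (B *ᵥ y) k = (M *ᵥ y) k := by simp [Matrix.mulVec, this]
      rw [h1, hy]
      simp [Pi.single_apply, hk]
  have hBinj : ∀ y : Fin n → ℝ, B *ᵥ y = 0 → y = 0 := by
    intro y hy
    by_contra h
    exact hBdet (Matrix.exists_mulVec_eq_zero_iff.1 ⟨y, h, hy⟩)
  have hxi : x i ≠ 0 := by
    intro h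
    apply hBdet
    apply Matrix.exists_mulVec_eq_zero_iff.1 ⟨x, hx, ?_⟩
    rw [key x hMx, h, zero_smul]
  have hker : ∀ y : Fin n → ℝ, M *ᵥ y = 0 → y = (y i / x i) • x := by
    intro y hy
    have h1 : B *ᵥ (y - (y i / x i) • x) = 0 := by
      rw [Matrix.mulVec_sub, Matrix.mulVec_smul, key x hMx, key y hy, smul_smul,
        div_mul_cancel₀ _ hxi, sub_self]
    have h2 := hBinj _ h1
    have := sub_eq_zero.1 h2
    simpa using this
  have hcol : ∀ j, M *ᵥ (fun k => M.adjugate k j) = 0 := by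
    intro j
    funext k
    have h1 : (M *ᵥ fun k => M.adjugate k j) k = (M * M.adjugate) k j := by
      simp [Matrix.mulVec, Matrix.mul_apply, dotProduct]
    rw [h1, Matrix.mul_adjugate, hdetM, zero_smul]
    rfl
  have hc : ∀ j k, M.adjugate k j = (M.adjugate i j / x i) * x k := by
    intro j k
    have := hker _ (hcol j)
    have h2 := congrFun this k
    simpa [mul_comm] using h2
  have hs : ∀ k j, M.adjugate k j = M.adjugate j k := by
    intro k j
    have h1 : (M.adjugate)ᵀ = M.adjugate := by
      rw [Matrix.adjugate_transpose, hsym]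
    have := congrFun (congrFun h1 k) j
    simpa [Matrix.transpose_apply] using this.symm
  refine ⟨M.adjugate i i / x i / x i, fun k j => ?_⟩
  rw [hc j k, hs i j, hc i j]
  ring

theorem sigma_of_one_homog_power_sign (n : ℕ) (α : ℝ) (hα : α ∈ Set.Ioo (0 : ℝ) 1)
    (Ω : Set (EuclideanSpace ℝ (Fin n))) (hΩ : IsOpen Ω)
    (hcone : ∀ x ∈ Ω, ∀ t : ℝ, 0 < t → t • x ∈ Ω) (h0 : (0 : EuclideanSpace ℝ (Fin n)) ∉ Ω)
    (u : EuclideanSpace ℝ (Fin n) → ℝ)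
    (hreg : ContDiffOn ℝ 2 u Ω) (hpos : ∀ x ∈ Ω, 0 < u x)
    (hhom : ∀ t : ℝ, 0 < t → ∀ x ∈ Ω, u (t • x) = t ^ α * u x)
    (hdet : ∀ x ∈ Ω, (hessianMatrix n u x).det ≠ 0)
    (v : EuclideanSpace ℝ (Fin n) → ℝ) (hv : ∀ x, v x = u x ^ (1 / α)) :
    ∀ x ∈ Ω, (hessianMatrix n v x).adjugate.trace ≠ 0 ∧
      (hessianMatrix n v x).adjugate.trace * (hessianMatrix n u x).det < 0 := by
  have hα0 : 0 < α := hα.1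
  have hα1 : α < 1 := hα.2
  -- basic regularity facts on Ω
  have hu2 : ∀ y ∈ Ω, ContDiffAt ℝ 2 u y := fun y hy => hreg.contDiffAt (hΩ.mem_nhds hy)
  have hv2 : ∀ y ∈ Ω, ContDiffAt ℝ 2 v y := by
    intro y hy
    have : ContDiffAt ℝ 2 (fun z => u z ^ (1/α)) y :=
      (hu2 y hy).rpow_const_of_ne (hpos y hy).ne'
    exact this.congr_of_eventuallyEq (Filter.Eventually.of_forall fun z => hv z)
  have hvdiff : ∀ y ∈ Ω, DifferentiableAt ℝ v y := fun y hy =>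
    (hv2 y hy).differentiableAt two_ne_zero
  have hvpos : ∀ y ∈ Ω, 0 < v y := fun y hy => by
    rw [hv]; exact Real.rpow_pos_of_pos (hpos y hy) _
  have hvhom : ∀ t : ℝ, 0 < t → ∀ y ∈ Ω, v (t • y) = t * v y := by
    intro t ht y hy
    have h2 : (t ^ α) ^ (1/α) = t := by
      rw [← Real.rpow_mul ht.le, mul_one_div_cancel hα0.ne', Real.rpow_one]
    rw [hv, hv, hhom t ht y hy,
      Real.mul_rpow (Real.rpow_nonneg ht.le _) (hpos y hy).le, h2]
  have huv : ∀ y ∈ Ω, u y = v y ^ α := by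
    intro y hy
    have h1 : (u y ^ (1/α)) ^ α = u y := by
      rw [← Real.rpow_mul (hpos y hy).le, one_div_mul_cancel hα0.ne', Real.rpow_one]
    rw [hv]; exact h1.symm
  intro x hx
  have hxΩ : Ω ∈ nhds x := hΩ.mem_nhds hx
  have hvx : 0 < v x := hvpos x hx
  -- homogeneity of the gradient of v
  have hgrad : ∀ t : ℝ, 0 < t → fderiv ℝ v (t • x) = fderiv ℝ v x := by
    intro t ht
    have htx : t • x ∈ Ω := hcone x hx t ht
    have h1 : HasFDerivAt (fun y => v (t • y))
        ((fderiv ℝ v (t • x)).comp (t • ContinuousLinearMap.id ℝ (EuclideanSpace ℝ (Fin n)))) x :=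
      ((hvdiff _ htx).hasFDerivAt).comp x ((hasFDerivAt_id x).const_smul t)
    have h2 : (fun y => v (t • y)) =ᶠ[nhds x] fun y => t * v y := by
      filter_upwards [hxΩ] with y hy
      exact hvhom t ht y hy
    have h3 : HasFDerivAt (fun y => t * v y)
        ((fderiv ℝ v (t • x)).comp (t • ContinuousLinearMap.id ℝ (EuclideanSpace ℝ (Fin n)))) x :=
      h1.congr_of_eventuallyEq h2.symm
    have h4 : HasFDerivAt (fun y => t * v y) (t • fderiv ℝ v x) x :=
      ((hvdiff x hx).hasFDerivAt).const_mul t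
    have h5 := h3.unique h4
    ext w
    have h6 := DFunLike.congr_fun h5 w
    simp only [ContinuousLinearMap.comp_apply, ContinuousLinearMap.smul_apply,
      ContinuousLinearMap.id_apply, ContinuousLinearMap.map_smul, smul_eq_mul] at h6
    exact mul_left_cancel₀ ht.ne' h6
  have hsmulx : HasDerivAt (fun s : ℝ => s • x) x 1 := by
    simpa using (hasDerivAt_id (1:ℝ)).smul_const x
  have hpos1 : ∀ᶠ t in nhds (1:ℝ), 0 < t := eventually_gt_nhds (by norm_num)
  -- Euler identity for v
  have heuler1 : fderiv ℝ v x x = v x := by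
    have hx1 : HasFDerivAt v (fderiv ℝ v x) ((1:ℝ) • x) := by
      rw [one_smul]; exact (hvdiff x hx).hasFDerivAt
    have h1 : HasDerivAt (fun t : ℝ => v (t • x)) (fderiv ℝ v x x) 1 :=
      hx1.comp_hasDerivAt 1 hsmulx
    have h2 : (fun t : ℝ => v (t • x)) =ᶠ[nhds (1:ℝ)] fun t => t * v x := by
      filter_upwards [hpos1] with t ht
      exact hvhom t ht x hx
    have h3 : HasDerivAt (fun t : ℝ => t * v x) (fderiv ℝ v x x) 1 :=
      h1.congr_of_eventuallyEq h2.symm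
    have h4 : HasDerivAt (fun t : ℝ => t * v x) (v x) 1 := by
      simpa using (hasDerivAt_id (1:ℝ)).mul_const (v x)
    exact h3.unique h4
  have hD2diff : DifferentiableAt ℝ (fderiv ℝ v) x := by
    have h1 : ContDiffAt ℝ 1 (fderiv ℝ v) x := (hv2 x hx).fderiv_right (m := 1) (by norm_num)
    exact h1.differentiableAt one_ne_zero
  -- Euler identity for the second derivative of v
  have heuler2 : fderiv ℝ (fderiv ℝ v) x x = 0 := by
    have hx1 : HasFDerivAt (fderiv ℝ v) (fderiv ℝ (fderiv ℝ v) x) ((1:ℝ) • x) := by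
      rw [one_smul]; exact hD2diff.hasFDerivAt
    have h1 : HasDerivAt (fun t : ℝ => fderiv ℝ v (t • x)) (fderiv ℝ (fderiv ℝ v) x x) 1 :=
      hx1.comp_hasDerivAt 1 hsmulx
    have h2 : (fun t : ℝ => fderiv ℝ v (t • x)) =ᶠ[nhds (1:ℝ)] fun _ => fderiv ℝ v x := by
      filter_upwards [hpos1] with t ht
      exact hgrad t ht
    have h3 : HasDerivAt (fun _ : ℝ => fderiv ℝ v x) (fderiv ℝ (fderiv ℝ v) x x) 1 :=
      h1.congr_of_eventuallyEq h2.symm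
    exact h3.unique (hasDerivAt_const 1 _)
  have hsymm : IsSymmSndFDerivAt ℝ v x := (hv2 x hx).isSymmSndFDerivAt (by simp [minSmoothness_of_isRCLikeNormedField])
  -- gradient of u on Ω
  have hgradu : ∀ y ∈ Ω, fderiv ℝ u y = (α * v y ^ (α - 1)) • fderiv ℝ v y := by
    intro y hy
    have h1 : HasFDerivAt (fun z => v z ^ α) ((α * v y ^ (α - 1)) • fderiv ℝ v y) y :=
      HasFDerivAt.rpow_const ((hvdiff y hy).hasFDerivAt) (Or.inl (hvpos y hy).ne')
    have h2 : u =ᶠ[nhds y] fun z => v z ^ α := by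
      filter_upwards [hΩ.mem_nhds hy] with z hz
      exact huv z hz
    exact (h1.congr_of_eventuallyEq h2).fderiv
  set c2 : ℝ := α * v x ^ (α - 1) with hc2
  set c1 : ℝ := α * ((α - 1) * v x ^ (α - 2)) with hc1
  set p : Fin n → ℝ := fun i => fderiv ℝ v x (EuclideanSpace.single i (1:ℝ)) with hp
  set M : Matrix (Fin n) (Fin n) ℝ := hessianMatrix n v x with hMdef
  -- second derivative of u at x
  have hcder : HasFDerivAt (fun y => α * v y ^ (α - 1)) (c1 • fderiv ℝ v x) x := by
    have h1 := (HasFDerivAt.rpow_const (p := α - 1) ((hvdiff x hx).hasFDerivAt)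
      (Or.inl (hvpos x hx).ne')).const_mul α
    have h2 : α • (((α - 1) * v x ^ (α - 1 - 1)) • fderiv ℝ v x) = c1 • fderiv ℝ v x := by
      rw [smul_smul, show α - 1 - 1 = α - 2 by ring]
    rwa [h2] at h1
  have hFu : HasFDerivAt (fderiv ℝ u)
      (c2 • fderiv ℝ (fderiv ℝ v) x + (c1 • fderiv ℝ v x).smulRight (fderiv ℝ v x)) x := by
    have h1 := hcder.smul hD2diff.hasFDerivAt
    have h2 : fderiv ℝ u =ᶠ[nhds x] fun y => (α * v y ^ (α - 1)) • fderiv ℝ v y := by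
      filter_upwards [hxΩ] with y hy
      exact hgradu y hy
    exact h1.congr_of_eventuallyEq h2
  have hMentry : ∀ i j, M i j =
      fderiv ℝ (fderiv ℝ v) x (EuclideanSpace.single i (1:ℝ)) (EuclideanSpace.single j (1:ℝ)) := by
    intro i j
    simp [hMdef, hessianMatrix, iteratedFDeriv_two_apply]
  have hHu : ∀ i j, hessianMatrix n u x i j = c2 * M i j + (c1 * p i) * p j := by
    intro i j
    have h1 : hessianMatrix n u x i j = fderiv ℝ (fderiv ℝ u) x
        (EuclideanSpace.single i (1:ℝ)) (EuclideanSpace.single j (1:ℝ)) := by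
      simp [hessianMatrix, iteratedFDeriv_two_apply]
    rw [h1, hFu.fderiv, hMentry i j]
    simp only [ContinuousLinearMap.add_apply, ContinuousLinearMap.coe_smul',
      Pi.smul_apply, ContinuousLinearMap.smulRight_apply, ContinuousLinearMap.smul_apply,
      smul_eq_mul]
    rfl
  -- coordinates of x
  set xc : Fin n → ℝ := fun i => x i with hxc
  have hdecomp : x = ∑ i, x i • EuclideanSpace.single i (1:ℝ) := by
    have := (EuclideanSpace.basisFun (Fin n) ℝ).sum_repr x
    simp only [EuclideanSpace.basisFun_repr, EuclideanSpace.basisFun_apply] at this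
    exact this.symm
  have hxc0 : xc ≠ 0 := by
    intro h
    apply h0
    have hx0 : x = (0 : EuclideanSpace ℝ (Fin n)) := by
      ext i
      exact congrFun h i
    rwa [hx0] at hx
  have hMx : M *ᵥ xc = 0 := by
    funext i
    have h1 : (M *ᵥ xc) i = ∑ j, M i j * xc j := rfl
    have h2 : ∀ j, M i j * xc j =
        fderiv ℝ (fderiv ℝ v) x (EuclideanSpace.single i (1:ℝ)) (xc j • EuclideanSpace.single j (1:ℝ)) := by
      intro j
      rw [ContinuousLinearMap.map_smul, hMentry i j, smul_eq_mul, mul_comm]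
    rw [h1]
    calc ∑ j, M i j * xc j
        = ∑ j, fderiv ℝ (fderiv ℝ v) x (EuclideanSpace.single i (1:ℝ))
            (xc j • EuclideanSpace.single j (1:ℝ)) := Finset.sum_congr rfl fun j _ => h2 j
      _ = fderiv ℝ (fderiv ℝ v) x (EuclideanSpace.single i (1:ℝ))
            (∑ j, xc j • EuclideanSpace.single j (1:ℝ)) := by rw [map_sum]
      _ = fderiv ℝ (fderiv ℝ v) x (EuclideanSpace.single i (1:ℝ)) x := by rw [← hdecomp]
      _ = fderiv ℝ (fderiv ℝ v) x x (EuclideanSpace.single i (1:ℝ)) := hsymm _ _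
      _ = 0 := by rw [heuler2]; rfl
  have hpx : ∑ i, p i * xc i = v x := by
    have h2 : ∀ i, p i * xc i = fderiv ℝ v x (xc i • EuclideanSpace.single i (1:ℝ)) := by
      intro i
      rw [ContinuousLinearMap.map_smul, smul_eq_mul, mul_comm]
    calc ∑ i, p i * xc i
        = ∑ i, fderiv ℝ v x (xc i • EuclideanSpace.single i (1:ℝ)) :=
          Finset.sum_congr rfl fun i _ => h2 i
      _ = fderiv ℝ v x (∑ i, xc i • EuclideanSpace.single i (1:ℝ)) := by rw [map_sum]
      _ = fderiv ℝ v x x := by rw [← hdecomp]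
      _ = v x := heuler1
  have hMsym : Mᵀ = M := by
    ext i j
    rw [Matrix.transpose_apply, hMentry i j, hMentry j i]
    exact (hsymm _ _).symm
  -- the adjugate of M is a rank one matrix
  obtain ⟨c, hcadj⟩ := adjugate_eq_smul_outer M hMsym xc hxc0 hMx
  have hdetM : M.det = 0 := Matrix.exists_mulVec_eq_zero_iff.1 ⟨xc, hxc0, hMx⟩
  -- determinant of the Hessian of u
  have hHu' : hessianMatrix n u x = Matrix.of fun i j => (c2 • M) i j + (c1 • p) i * p j := by
    ext i j
    rw [Matrix.of_apply, hHu i j]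
    simp only [Matrix.smul_apply, Pi.smul_apply, smul_eq_mul]
  have hupdate : ∀ i : Fin n, ((c2 • M).updateRow i p).det = c2 ^ (n - 1) * (c * xc i * v x) := by
    intro i
    have e1 : ((c2 • M).updateRow i p).det = Matrix.cramer ((c2 • M))ᵀ p i :=
      (Matrix.cramer_transpose_apply _ p i).symm
    have e2 : (c2 • M)ᵀ = c2 • M := by rw [Matrix.transpose_smul, hMsym]
    have e3 : (M.adjugate *ᵥ p) i = c * xc i * v x := by
      have h4 : ∀ j, M.adjugate i j * p j = (c * xc i) * (p j * xc j) := by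
        intro j
        rw [hcadj]
        ring
      calc (M.adjugate *ᵥ p) i = ∑ j, M.adjugate i j * p j := rfl
        _ = ∑ j, (c * xc i) * (p j * xc j) := Finset.sum_congr rfl fun j _ => h4 j
        _ = (c * xc i) * ∑ j, p j * xc j := (Finset.mul_sum _ _ _).symm
        _ = c * xc i * v x := by rw [hpx]
    rw [e1, e2, Matrix.cramer_eq_adjugate_mulVec, Matrix.adjugate_smul,
      Matrix.smul_mulVec, Pi.smul_apply, smul_eq_mul, e3, Fintype.card_fin]
  have hdetH : (hessianMatrix n u x).det = c1 * c2 ^ (n - 1) * c * v x ^ 2 := by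
    rw [hHu', det_add_outer, Matrix.det_smul, hdetM, mul_zero, zero_add]
    calc ∑ i, (c1 • p) i * ((c2 • M).updateRow i p).det
        = ∑ i, (c1 * c2 ^ (n - 1) * c * v x) * (p i * xc i) := by
          refine Finset.sum_congr rfl fun i _ => ?_
          rw [hupdate i, Pi.smul_apply, smul_eq_mul]
          ring
      _ = (c1 * c2 ^ (n - 1) * c * v x) * ∑ i, p i * xc i := (Finset.mul_sum _ _ _).symm
      _ = c1 * c2 ^ (n - 1) * c * v x ^ 2 := by rw [hpx]; ring
  -- trace of the adjugate
  have htr : M.adjugate.trace = c * ∑ i, xc i ^ 2 := by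
    rw [Matrix.trace, Finset.mul_sum]
    refine Finset.sum_congr rfl fun i _ => ?_
    rw [Matrix.diag_apply, hcadj]
    ring
  -- signs
  have hS : 0 < ∑ i, xc i ^ 2 := by
    obtain ⟨i₀, hi₀⟩ := Function.ne_iff.1 hxc0
    refine Finset.sum_pos' (fun i _ => sq_nonneg _) ⟨i₀, Finset.mem_univ _, ?_⟩
    exact lt_of_le_of_ne (sq_nonneg _) (Ne.symm (pow_ne_zero 2 hi₀))
  have hc2pos : 0 < c2 := by
    rw [hc2]
    exact mul_pos hα0 (Real.rpow_pos_of_pos hvx _)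
  have hc1neg : c1 < 0 := by
    rw [hc1]
    exact mul_neg_of_pos_of_neg hα0
      (mul_neg_of_neg_of_pos (by linarith) (Real.rpow_pos_of_pos hvx _))
  have hdetu := hdet x hx
  have hcne : c ≠ 0 := by
    intro h
    rw [hdetH, h] at hdetu
    simp at hdetu
  have hcsq : 0 < c ^ 2 := lt_of_le_of_ne (sq_nonneg _) (Ne.symm (pow_ne_zero 2 hcne))
  have htrne : M.adjugate.trace ≠ 0 := by
    rw [htr]
    exact mul_ne_zero hcne hS.ne'
  refine ⟨htrne, ?_⟩
  have hkey : M.adjugate.trace * (hessianMatrix n u x).det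
      = c1 * (c ^ 2 * (∑ i, xc i ^ 2) * v x ^ 2 * c2 ^ (n - 1)) := by
    rw [htr, hdetH]
    ring
  rw [hkey]
  refine mul_neg_of_neg_of_pos hc1neg ?_
  have h1 : 0 < v x ^ 2 := pow_pos hvx 2
  have h2 : 0 < c2 ^ (n - 1) := pow_pos hc2pos _
  positivity
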